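/- Let H_1,…,H_k be finite simple graphs, where H_i has m_i vertices (2 ≤ m_i ≤ m) and p_i edges (1 ≤ p_i ≤ p) with p ≥ 2, and let β_1,…,β_k ∈ ℝ. Fix M > 1 and suppose m(m−1) Σ_{i=1}^k |β_i| ≤ (log M)(p−1)^p / (2(Mp)^p(1 + (p−1) log M)). For each n, set K(X) = n² Σ_{i=1}^k β_i d(H_i,X) for X ⊆ E_n and W_n = 2^{−C(n,2)} Σ_{σ : E_n → {0,1}} exp(Σ_{X ⊆ E_n} K(X) σ_X). Then for every n, |log W_n| ≤ C(n,2) · log M; in particular, any limit point of the sequence (1/C(n,2)) log W_n is bounded in absolute value by log M. -/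
import Mathlib


open Finset

attribute [local instance] Classical.propDecidable

/-- `E_n`: the set of vertex pairs (2-element subsets) of `V_n = Fin n`, modeled as
non-diagonal elements of `Sym2 (Fin n)`. -/
abbrev VertexPair (n : ℕ) := {e : Sym2 (Fin n) // ¬ e.IsDiag}

/-- Exact homomorphism density `d(H,X) = |ehom(H,X)| / n^{m'}`. -/
noncomputable def exactDensity {m' n : ℕ} (H : SimpleGraph (Fin m')) (X : Finset (VertexPair n)) :
    ℝ :=
  (Nat.card {f : Fin m' → Fin n //
      (∀ u v, H.Adj u v → f u ≠ f v) ∧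
      Sym2.map f '' H.edgeSet = Subtype.val '' (X : Set (VertexPair n))} : ℝ) / (n : ℝ) ^ m'

/-- The interaction `K(X) = n² Σ_{i=1}^k β_i d(H_i,X)` for `X ⊆ E_n`. -/
noncomputable def interactionK {k : ℕ} (mi : Fin k → ℕ) (H : ∀ i, SimpleGraph (Fin (mi i)))
    (β : Fin k → ℝ) (n : ℕ) (X : Finset (VertexPair n)) : ℝ :=
  (n : ℝ) ^ 2 * ∑ i, β i * exactDensity (H i) X

/-- The normalized lattice gas partition function
`W_n = 2^{−C(n,2)} Σ_{σ : E_n → {0,1}} exp(Σ_{X ⊆ E_n} K(X) σ_X)`. -/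
noncomputable def latticeW {k : ℕ} (mi : Fin k → ℕ) (H : ∀ i, SimpleGraph (Fin (mi i)))
    (β : Fin k → ℝ) (n : ℕ) : ℝ :=
  ((2 : ℝ) ^ n.choose 2)⁻¹ *
    ∑ σ : VertexPair n → Bool,
      Real.exp (∑ X : Finset (VertexPair n),
        interactionK mi H β n X * ∏ e ∈ X, (if σ e then (1 : ℝ) else 0))

-- auxiliary: densities are nonneg
lemma exactDensity_nonneg {m' n : ℕ} (H : SimpleGraph (Fin m')) (X : Finset (VertexPair n)) :
    0 ≤ exactDensity H X := by
  unfold exactDensity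
  positivity

lemma sum_exactDensity_le_one {m' n : ℕ} (hn : 1 ≤ n) (H : SimpleGraph (Fin m')) :
    ∑ X : Finset (VertexPair n), exactDensity H X ≤ 1 := by
  have key : ∑ X : Finset (VertexPair n), (Nat.card {f : Fin m' → Fin n //
      (∀ u v, H.Adj u v → f u ≠ f v) ∧
      Sym2.map f '' H.edgeSet = Subtype.val '' (X : Set (VertexPair n))}) ≤ n ^ m' := by
    have hcard : ∀ X : Finset (VertexPair n), (Nat.card {f : Fin m' → Fin n //
        (∀ u v, H.Adj u v → f u ≠ f v) ∧
        Sym2.map f '' H.edgeSet = Subtype.val '' (X : Set (VertexPair n))}) =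
        (Finset.univ.filter (fun f : Fin m' → Fin n =>
          (∀ u v, H.Adj u v → f u ≠ f v) ∧
          Sym2.map f '' H.edgeSet = Subtype.val '' (X : Set (VertexPair n)))).card := by
      intro X
      rw [Nat.card_eq_fintype_card, Fintype.card_subtype]
    calc ∑ X : Finset (VertexPair n), (Nat.card {f : Fin m' → Fin n //
        (∀ u v, H.Adj u v → f u ≠ f v) ∧
        Sym2.map f '' H.edgeSet = Subtype.val '' (X : Set (VertexPair n))})
        = ∑ X : Finset (VertexPair n), (Finset.univ.filter (fun f : Fin m' → Fin n =>
          (∀ u v, H.Adj u v → f u ≠ f v) ∧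
          Sym2.map f '' H.edgeSet = Subtype.val '' (X : Set (VertexPair n)))).card := by
          exact Finset.sum_congr rfl (fun X _ => hcard X)
      _ = (Finset.univ.biUnion (fun X : Finset (VertexPair n) =>
            Finset.univ.filter (fun f : Fin m' → Fin n =>
            (∀ u v, H.Adj u v → f u ≠ f v) ∧
            Sym2.map f '' H.edgeSet = Subtype.val '' (X : Set (VertexPair n))))).card := by
          rw [Finset.card_biUnion]
          intro X _ Y _ hXY
          refine Finset.disjoint_left.mpr ?_
          intro f hfX hfY
          simp only [Finset.mem_filter] at hfX hfY
          apply hXY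
          have h : Subtype.val '' (X : Set (VertexPair n)) = Subtype.val '' (Y : Set (VertexPair n)) := by
            rw [← hfX.2.2, hfY.2.2]
          have := (Set.image_injective.mpr Subtype.val_injective) h
          exact Finset.coe_injective this
      _ ≤ (Finset.univ : Finset (Fin m' → Fin n)).card := Finset.card_le_card (Finset.subset_univ _)
      _ = n ^ m' := by simp [Fintype.card_fun]
  have hnpos : (0:ℝ) < (n:ℝ) ^ m' := by positivity
  unfold exactDensity
  rw [← Finset.sum_div, div_le_one hnpos]
  calc ∑ X : Finset (VertexPair n), ((Nat.card {f : Fin m' → Fin n //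
        (∀ u v, H.Adj u v → f u ≠ f v) ∧
        Sym2.map f '' H.edgeSet = Subtype.val '' (X : Set (VertexPair n))}) : ℝ)
      = ((∑ X : Finset (VertexPair n), Nat.card {f : Fin m' → Fin n //
        (∀ u v, H.Adj u v → f u ≠ f v) ∧
        Sym2.map f '' H.edgeSet = Subtype.val '' (X : Set (VertexPair n))} : ℕ) : ℝ) := by
        push_cast; rfl
    _ ≤ ((n ^ m' : ℕ) : ℝ) := by exact_mod_cast key
    _ = (n : ℝ) ^ m' := by push_cast; rfl

lemma abs_sum_K_le {k : ℕ} (mi : Fin k → ℕ) (H : ∀ i, SimpleGraph (Fin (mi i)))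
    (β : Fin k → ℝ) {n : ℕ} (hn : 1 ≤ n) (σ : VertexPair n → Bool) :
    |∑ X : Finset (VertexPair n),
        interactionK mi H β n X * ∏ e ∈ X, (if σ e then (1 : ℝ) else 0)| ≤
      (n : ℝ) ^ 2 * ∑ i, |β i| := by
  calc |∑ X : Finset (VertexPair n),
        interactionK mi H β n X * ∏ e ∈ X, (if σ e then (1 : ℝ) else 0)|
      ≤ ∑ X : Finset (VertexPair n),
        |interactionK mi H β n X * ∏ e ∈ X, (if σ e then (1 : ℝ) else 0)| :=
        Finset.abs_sum_le_sum_abs _ _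
    _ ≤ ∑ X : Finset (VertexPair n), (n : ℝ) ^ 2 * ∑ i, |β i| * exactDensity (H i) X := by
        refine Finset.sum_le_sum fun X _ => ?_
        rw [abs_mul]
        have hprod : |∏ e ∈ X, (if σ e then (1 : ℝ) else 0)| ≤ 1 := by
          rw [abs_prod]
          refine Finset.prod_le_one (fun e _ => abs_nonneg _) (fun e _ => ?_)
          by_cases h : σ e <;> simp [h]
        have hK : |interactionK mi H β n X| ≤ (n : ℝ) ^ 2 * ∑ i, |β i| * exactDensity (H i) X := by
          unfold interactionK
          rw [abs_mul, abs_of_nonneg (by positivity : (0:ℝ) ≤ (n:ℝ)^2)]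
          refine mul_le_mul_of_nonneg_left ?_ (by positivity)
          calc |∑ i, β i * exactDensity (H i) X| ≤ ∑ i, |β i * exactDensity (H i) X| :=
              Finset.abs_sum_le_sum_abs _ _
            _ = ∑ i, |β i| * exactDensity (H i) X := by
              refine Finset.sum_congr rfl fun i _ => ?_
              rw [abs_mul, abs_of_nonneg (exactDensity_nonneg _ _)]
        calc |interactionK mi H β n X| * |∏ e ∈ X, (if σ e then (1 : ℝ) else 0)|
            ≤ |interactionK mi H β n X| * 1 :=
              mul_le_mul_of_nonneg_left hprod (abs_nonneg _)
          _ = |interactionK mi H β n X| := mul_one _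
          _ ≤ _ := hK
    _ = (n : ℝ) ^ 2 * ∑ i, |β i| * ∑ X : Finset (VertexPair n), exactDensity (H i) X := by
        rw [← Finset.mul_sum, Finset.sum_comm]
        congr 1
        exact Finset.sum_congr rfl fun i _ => (Finset.mul_sum _ _ _).symm
    _ ≤ (n : ℝ) ^ 2 * ∑ i, |β i| := by
        refine mul_le_mul_of_nonneg_left ?_ (by positivity)
        calc ∑ i, |β i| * ∑ X : Finset (VertexPair n), exactDensity (H i) X
            ≤ ∑ i, |β i| * 1 :=
              Finset.sum_le_sum fun i _ =>
                mul_le_mul_of_nonneg_left (sum_exactDensity_le_one hn (H i)) (abs_nonneg _)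
          _ = ∑ i, |β i| := by simp

lemma abs_log_latticeW_le {k : ℕ} (mi : Fin k → ℕ) (H : ∀ i, SimpleGraph (Fin (mi i)))
    (β : Fin k → ℝ) {n : ℕ} (hn : 1 ≤ n) :
    |Real.log (latticeW mi H β n)| ≤ (n : ℝ) ^ 2 * ∑ i, |β i| := by
  set B := (n : ℝ) ^ 2 * ∑ i, |β i| with hB
  have hcard : (Fintype.card (VertexPair n → Bool)) = 2 ^ n.choose 2 := by
    rw [Fintype.card_fun, Fintype.card_bool, Sym2.card_subtype_not_diag, Fintype.card_fin]
  have h2pos : (0:ℝ) < (2 : ℝ) ^ n.choose 2 := by positivity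
  have hub : latticeW mi H β n ≤ Real.exp B := by
    unfold latticeW
    rw [inv_mul_le_iff₀ h2pos]
    calc ∑ σ : VertexPair n → Bool, Real.exp (∑ X : Finset (VertexPair n),
          interactionK mi H β n X * ∏ e ∈ X, (if σ e then (1 : ℝ) else 0))
        ≤ ∑ _σ : VertexPair n → Bool, Real.exp B :=
          Finset.sum_le_sum fun σ _ => Real.exp_le_exp.mpr
            (le_of_abs_le (abs_sum_K_le mi H β hn σ))
      _ = (Fintype.card (VertexPair n → Bool) : ℝ) * Real.exp B := by
          rw [Finset.sum_const, Finset.card_univ, nsmul_eq_mul]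
      _ = (2 : ℝ) ^ n.choose 2 * Real.exp B := by rw [hcard]; push_cast; ring
  have hlb : Real.exp (-B) ≤ latticeW mi H β n := by
    unfold latticeW
    rw [le_inv_mul_iff₀ h2pos]
    calc (2 : ℝ) ^ n.choose 2 * Real.exp (-B)
        = (Fintype.card (VertexPair n → Bool) : ℝ) * Real.exp (-B) := by
          rw [hcard]; push_cast; ring
      _ = ∑ _σ : VertexPair n → Bool, Real.exp (-B) := by
          rw [Finset.sum_const, Finset.card_univ, nsmul_eq_mul]
      _ ≤ _ := Finset.sum_le_sum fun σ _ => Real.exp_le_exp.mpr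
            (neg_le_of_abs_le (abs_sum_K_le mi H β hn σ))
  have hWpos : 0 < latticeW mi H β n := lt_of_lt_of_le (Real.exp_pos _) hlb
  rw [abs_le]
  constructor
  · calc -B = Real.log (Real.exp (-B)) := (Real.log_exp _).symm
      _ ≤ Real.log (latticeW mi H β n) := Real.log_le_log (Real.exp_pos _) hlb
  · calc Real.log (latticeW mi H β n) ≤ Real.log (Real.exp B) :=
        Real.log_le_log hWpos hub
      _ = B := Real.log_exp _

-- small-parameter arithmetic
lemma small_param {k m p : ℕ} (hp : 2 ≤ p) (hm : k ≠ 0 → 2 ≤ m) (β : Fin k → ℝ)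
    (M : ℝ) (hM : 1 < M)
    (hsmall : (m : ℝ) * ((m : ℝ) - 1) * ∑ i, |β i| ≤
      Real.log M * ((p : ℝ) - 1) ^ p /
        (2 * (M * (p : ℝ)) ^ p * (1 + ((p : ℝ) - 1) * Real.log M))) :
    ∑ i, |β i| ≤ Real.log M / 4 := by
  have hL : 0 < Real.log M := Real.log_pos hM
  rcases Nat.eq_zero_or_pos k with hk | hk
  · subst hk; simp; positivity
  have hm2 : (2:ℝ) ≤ (m:ℝ) := by exact_mod_cast hm hk.ne'
  have hp2 : (2:ℝ) ≤ (p:ℝ) := by exact_mod_cast hp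
  have hs0 : 0 ≤ ∑ i, |β i| := Finset.sum_nonneg fun i _ => abs_nonneg _
  have h2s : 2 * ∑ i, |β i| ≤ (m : ℝ) * ((m : ℝ) - 1) * ∑ i, |β i| := by
    refine mul_le_mul_of_nonneg_right ?_ hs0
    nlinarith
  have hpow : ((p:ℝ) - 1) ^ p ≤ (M * (p:ℝ)) ^ p := by
    refine pow_le_pow_left₀ (by linarith) ?_ p
    nlinarith
  have hfac : (1:ℝ) ≤ 1 + ((p:ℝ) - 1) * Real.log M := by nlinarith
  have hDpos : 0 < 2 * (M * (p:ℝ)) ^ p * (1 + ((p:ℝ) - 1) * Real.log M) := by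
    have : (0:ℝ) < (M * (p:ℝ)) ^ p := by positivity
    nlinarith
  have hR : Real.log M * ((p : ℝ) - 1) ^ p /
        (2 * (M * (p : ℝ)) ^ p * (1 + ((p : ℝ) - 1) * Real.log M)) ≤ Real.log M / 2 := by
    rw [div_le_div_iff₀ hDpos (by norm_num : (0:ℝ) < 2)]
    have h1 : Real.log M * ((p:ℝ)-1)^p ≤ Real.log M * (M*(p:ℝ))^p :=
      mul_le_mul_of_nonneg_left hpow hL.le
    have h2 : (0:ℝ) ≤ Real.log M * (M*(p:ℝ))^p := by positivity
    nlinarith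
  linarith

lemma latticeW_one {k : ℕ} (mi : Fin k → ℕ) (H : ∀ i, SimpleGraph (Fin (mi i)))
    (β : Fin k → ℝ) (hedges : ∀ i, 1 ≤ ((H i).edgeSet.ncard)) :
    latticeW mi H β 1 = 1 := by
  have hd : ∀ (i : Fin k) (X : Finset (VertexPair 1)), exactDensity (H i) X = 0 := by
    intro i X
    have hne : (H i).edgeSet.Nonempty := by
      rcases Set.eq_empty_or_nonempty (H i).edgeSet with h | h
      · exfalso; have := hedges i; rw [h] at this; simp [Set.ncard_empty] at this
      · exact h
    obtain ⟨e, he⟩ := hne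
    have hadj : ∃ u v, (H i).Adj u v := by
      induction e using Sym2.ind with
      | _ u v => exact ⟨u, v, (H i).mem_edgeSet.mp he⟩
    obtain ⟨u, v, huv⟩ := hadj
    have : IsEmpty {f : Fin (mi i) → Fin 1 //
        (∀ u v, (H i).Adj u v → f u ≠ f v) ∧
        Sym2.map f '' (H i).edgeSet = Subtype.val '' (X : Set (VertexPair 1))} := by
      constructor
      rintro ⟨f, hf1, _⟩
      exact hf1 u v huv (Subsingleton.elim _ _)
    unfold exactDensity
    rw [Nat.card_of_isEmpty]
    simp
  have hK : ∀ X : Finset (VertexPair 1), interactionK mi H β 1 X = 0 := by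
    intro X
    unfold interactionK
    rw [Finset.sum_congr rfl (fun i _ => by rw [hd i X, mul_zero])]
    simp
  unfold latticeW
  have : ∀ σ : VertexPair 1 → Bool,
      (∑ X : Finset (VertexPair 1),
        interactionK mi H β 1 X * ∏ e ∈ X, (if σ e then (1 : ℝ) else 0)) = 0 := by
    intro σ
    refine Finset.sum_eq_zero fun X _ => by rw [hK X, zero_mul]
  rw [Finset.sum_congr rfl (fun σ _ => by rw [this σ, Real.exp_zero])]
  rw [Finset.sum_const, Finset.card_univ, Fintype.card_fun, Fintype.card_bool,
    Sym2.card_subtype_not_diag, Fintype.card_fin]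
  norm_num

/-- in the small parameter region
`m(m−1) Σ|β_i| ≤ (log M)(p−1)^p / (2(Mp)^p(1+(p−1)log M))`, for every `n` one has
`|log W_n| ≤ C(n,2)·log M`; in particular any limit point of `(1/C(n,2)) log W_n` is bounded
in absolute value by `log M`. -/
theorem free_energy_bounded_for_small_parameters {k m p : ℕ} (hp : 2 ≤ p)
    (mi : Fin k → ℕ) (hmi : ∀ i, 2 ≤ mi i ∧ mi i ≤ m)
    (H : ∀ i, SimpleGraph (Fin (mi i)))
    (hedges : ∀ i, 1 ≤ ((H i).edgeSet.ncard) ∧ (H i).edgeSet.ncard ≤ p)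
    (β : Fin k → ℝ) (M : ℝ) (hM : 1 < M)
    (hsmall : (m : ℝ) * ((m : ℝ) - 1) * ∑ i, |β i| ≤
      Real.log M * ((p : ℝ) - 1) ^ p /
        (2 * (M * (p : ℝ)) ^ p * (1 + ((p : ℝ) - 1) * Real.log M))) :
    (∀ n : ℕ, 1 ≤ n →
      |Real.log (latticeW mi H β n)| ≤ (n.choose 2 : ℝ) * Real.log M) ∧
    ∀ l : ℝ,
      MapClusterPt l Filter.atTop
        (fun n : ℕ => (1 / (n.choose 2 : ℝ)) * Real.log (latticeW mi H β n)) →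
      |l| ≤ Real.log M := by
  have hL : 0 < Real.log M := Real.log_pos hM
  have hm : k ≠ 0 → 2 ≤ m := by
    intro hk
    have i0 : Fin k := ⟨0, Nat.pos_of_ne_zero hk⟩
    exact le_trans (hmi i0).1 (hmi i0).2
  have hsum : ∑ i, |β i| ≤ Real.log M / 4 := small_param hp hm β M hM hsmall
  have hmain : ∀ n : ℕ, 1 ≤ n →
      |Real.log (latticeW mi H β n)| ≤ (n.choose 2 : ℝ) * Real.log M := by
    intro n hn
    rcases eq_or_lt_of_le hn with h1 | h2
    · -- n = 1
      rw [← h1, latticeW_one mi H β (fun i => (hedges i).1)]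
      simp [Real.log_one]
    · -- n ≥ 2
      have hn2 : (2:ℝ) ≤ (n:ℝ) := by exact_mod_cast h2
      have hch : ((n.choose 2 : ℕ) : ℝ) = (n:ℝ) * ((n:ℝ) - 1) / 2 := by
        rw [Nat.cast_choose_two]
      calc |Real.log (latticeW mi H β n)| ≤ (n : ℝ) ^ 2 * ∑ i, |β i| :=
          abs_log_latticeW_le mi H β hn
        _ ≤ (n : ℝ) ^ 2 * (Real.log M / 4) :=
          mul_le_mul_of_nonneg_left hsum (by positivity)
        _ ≤ (n.choose 2 : ℝ) * Real.log M := by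
          rw [hch]
          have hq : (n:ℝ)^2/4 ≤ (n:ℝ)*((n:ℝ)-1)/2 := by nlinarith
          nlinarith [mul_le_mul_of_nonneg_right hq hL.le]
  refine ⟨hmain, ?_⟩
  intro l hl
  set u := fun n : ℕ => (1 / (n.choose 2 : ℝ)) * Real.log (latticeW mi H β n) with hu
  have hS : IsClosed {x : ℝ | |x| ≤ Real.log M} := isClosed_le continuous_abs continuous_const
  have hev : ∀ᶠ n in Filter.atTop, u n ∈ {x : ℝ | |x| ≤ Real.log M} := by
    filter_upwards [Filter.eventually_ge_atTop 2] with n hn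
    have hn1 : 1 ≤ n := le_trans (by norm_num) hn
    have hc : 0 < (n.choose 2 : ℝ) := by
      have : 0 < n.choose 2 := Nat.choose_pos (by omega)
      exact_mod_cast this
    have := hmain n hn1
    show |1 / (n.choose 2 : ℝ) * Real.log (latticeW mi H β n)| ≤ Real.log M
    rw [abs_mul, abs_of_pos (show (0:ℝ) < 1 / (n.choose 2 : ℝ) by positivity),
      div_mul_eq_mul_div, one_mul, div_le_iff₀ hc]
    calc |Real.log (latticeW mi H β n)| ≤ (n.choose 2 : ℝ) * Real.log M := this
      _ = Real.log M * (n.choose 2 : ℝ) := mul_comm _ _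
  have hcl : ClusterPt l (Filter.map u Filter.atTop) := hl
  have hle : Filter.map u Filter.atTop ≤ Filter.principal {x : ℝ | |x| ≤ Real.log M} := by
    rw [Filter.le_principal_iff, Filter.mem_map]
    exact hev
  have : l ∈ closure {x : ℝ | |x| ≤ Real.log M} :=
    mem_closure_iff_clusterPt.mpr (hcl.mono hle)
  rwa [hS.closure_eq] at this
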